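/- Let z be a complex number with Im z > 0 and let a₁ < a < a₂ be real numbers with Arg(z - a) = (Arg(z - a₁) + Arg(z - a₂))/2, where Arg takes values in (0, π). Then: a₂ - a < a - a₁ if and only if Arg(z - a₁) + Arg(z - a₂) < π (equivalently a₁ + a₂ < 2 Re z). -/

import Mathlib

set_option maxHeartbeats 1000000

theorem stmt_16 (z : ℂ) (hz : 0 < z.im) (a₁ a a₂ : ℝ) (h₁ : a₁ < a) (h₂ : a < a₂)
    (hbis : Complex.arg (z - a) =
      (Complex.arg (z - a₁) + Complex.arg (z - a₂)) / 2) :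
    (a₂ - a < a - a₁ ↔ Complex.arg (z - a₁) + Complex.arg (z - a₂) < Real.pi) ∧
      (Complex.arg (z - a₁) + Complex.arg (z - a₂) < Real.pi ↔ a₁ + a₂ < 2 * z.re) := by
  have key : ∀ a' : ℝ, 0 < Complex.arg (z - a') ∧ Complex.arg (z - a') < Real.pi ∧
      0 < Real.sin (Complex.arg (z - a')) ∧
      Real.cos (Complex.arg (z - a')) * z.im =
        Real.sin (Complex.arg (z - a')) * (z.re - a') := by
    intro a'
    have him : (z - a').im = z.im := by simp
    have hre : (z - a').re = z.re - a' := by simp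
    have hne : (z - a' : ℂ) ≠ 0 := by
      intro h
      rw [h] at him; simp at him; linarith
    have habs : 0 < ‖(z - a' : ℂ)‖ := norm_pos_iff.mpr hne
    have hsin : 0 < Real.sin (Complex.arg (z - a')) := by
      rw [Complex.sin_arg, him]; positivity
    have hnn : 0 ≤ Complex.arg (z - a') := Complex.arg_nonneg_iff.2 (by rw [him]; exact hz.le)
    have hle : Complex.arg (z - a') ≤ Real.pi := Complex.arg_le_pi _
    have hpos : 0 < Complex.arg (z - a') := by
      rcases hnn.lt_or_eq with h | h
      · exact h
      · exfalso; rw [← h, Real.sin_zero] at hsin; exact lt_irrefl 0 hsin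
    have hlt : Complex.arg (z - a') < Real.pi := by
      rcases hle.lt_or_eq with h | h
      · exact h
      · exfalso; rw [h, Real.sin_pi] at hsin; exact lt_irrefl 0 hsin
    refine ⟨hpos, hlt, hsin, ?_⟩
    rw [Complex.sin_arg, Complex.cos_arg hne, him, hre]
    field_simp
  set θ₁ := Complex.arg (z - a₁) with hθ₁
  set θ₂ := Complex.arg (z - a₂) with hθ₂
  set φ := Complex.arg (z - a) with hφ
  obtain ⟨p₁, q₁, s₁, e₁⟩ := key a₁
  obtain ⟨p₂, q₂, s₂, e₂⟩ := key a₂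
  obtain ⟨p, q, s, e⟩ := key a
  set x := z.re
  set y := z.im
  -- θ₁ < θ₂
  have hsinsub : Real.sin (θ₂ - θ₁) * y = Real.sin θ₁ * Real.sin θ₂ * (a₂ - a₁) := by
    rw [Real.sin_sub]; nlinarith [e₁, e₂]
  have hθlt : θ₁ < θ₂ := by
    by_contra hcon
    push_neg at hcon
    have h1 : Real.sin (θ₂ - θ₁) ≤ 0 :=
      Real.sin_nonpos_of_nonpos_of_neg_pi_le (by linarith) (by linarith)
    nlinarith [mul_pos (mul_pos s₁ s₂) (sub_pos.2 (h₁.trans h₂))]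
  -- second iff
  have hsinsum : Real.sin (θ₁ + θ₂) * y = Real.sin θ₁ * Real.sin θ₂ * (2 * x - a₁ - a₂) := by
    rw [Real.sin_add]; nlinarith [e₁, e₂]
  have second : θ₁ + θ₂ < Real.pi ↔ a₁ + a₂ < 2 * x := by
    constructor
    · intro h
      have := Real.sin_pos_of_pos_of_lt_pi (x := θ₁ + θ₂) (by linarith) h
      nlinarith [mul_pos s₁ s₂]
    · intro h
      by_contra hcon
      push_neg at hcon
      have h1 : 0 ≤ Real.sin (θ₁ + θ₂ - Real.pi) :=
        Real.sin_nonneg_of_nonneg_of_le_pi (by linarith) (by linarith)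
      rw [Real.sin_sub_pi] at h1
      nlinarith [mul_pos s₁ s₂]
  -- first iff
  have hd : 0 < Real.sin ((θ₂ - θ₁) / 2) :=
    Real.sin_pos_of_pos_of_lt_pi (by linarith) (by linarith [Real.pi_pos])
  have hφ1 : φ - θ₁ = (θ₂ - θ₁) / 2 := by rw [hbis]; ring
  have hφ2 : θ₂ - φ = (θ₂ - θ₁) / 2 := by rw [hbis]; ring
  have key1 : (a - a₁) * (Real.sin θ₁ * Real.sin φ) = y * Real.sin ((θ₂ - θ₁) / 2) := by
    rw [← hφ1, Real.sin_sub]; nlinarith [e₁, e]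
  have key2 : (a₂ - a) * (Real.sin θ₂ * Real.sin φ) = y * Real.sin ((θ₂ - θ₁) / 2) := by
    rw [← hφ2, Real.sin_sub]; nlinarith [e₂, e]
  have hsins : Real.sin θ₂ - Real.sin θ₁ = 2 * Real.sin ((θ₂ - θ₁) / 2) * Real.cos φ := by
    rw [Real.sin_sub_sin, hbis]; ring_nf
  have heq : (a - a₁) * Real.sin θ₁ = (a₂ - a) * Real.sin θ₂ := by
    have h3 : ((a - a₁) * Real.sin θ₁) * Real.sin φ = ((a₂ - a) * Real.sin θ₂) * Real.sin φ := by
      rw [mul_assoc, mul_assoc, key1, key2]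
    exact mul_right_cancel₀ (ne_of_gt s) h3
  have first : a₂ - a < a - a₁ ↔ θ₁ + θ₂ < Real.pi := by
    have hc : a₂ - a < a - a₁ ↔ Real.sin θ₁ < Real.sin θ₂ := by
      constructor
      · intro h
        nlinarith [heq, sub_pos.2 h₁, sub_pos.2 h₂, s₁, s₂]
      · intro h
        nlinarith [heq, sub_pos.2 h₁, sub_pos.2 h₂, s₁, s₂]
    rw [hc]
    constructor
    · intro h
      have hcos : 0 < Real.cos φ := by nlinarith [hsins, hd]
      have hφlt : φ < Real.pi / 2 := by
        by_contra hcon2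
        push_neg at hcon2
        have := Real.cos_nonpos_of_pi_div_two_le_of_le hcon2 (by linarith [Real.pi_pos])
        linarith
      rw [hbis] at hφlt; linarith
    · intro h
      have hφlt : φ < Real.pi / 2 := by rw [hbis]; linarith
      have hcos : 0 < Real.cos φ :=
        Real.cos_pos_of_mem_Ioo ⟨by linarith [Real.pi_pos], hφlt⟩
      nlinarith [hsins, hd]
  exact ⟨first.trans (Iff.rfl), second⟩
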